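/- Let w ∈ H₀^{div}(Ω) with w·n = 0 on ∂Ω, and let R_h w be its Ritz projection into the finite element space with respect to the Nitsche form B, satisfying |||w − R_h w||| ≤ C h^{s−1}‖w‖_s for s ≥ 2. Then the normal trace of the projection satisfies ‖R_h w · n‖_{L²(∂Ω)} ≤ C h^{3/2} ‖w‖_{H²}, so R_h w·n → 0 as h → 0 even though R_h w need not satisfy the boundary condition exactly. -/

import Mathlib

open MeasureTheory Real
open scoped RealInnerProductSpace

noncomputable section

abbrev E2 := EuclideanSpace ℝ (Fin 2)

/-- Gradient of a scalar field on `ℝ²`. -/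
def grad (f : E2 → ℝ) (x : E2) : E2 :=
  WithLp.toLp 2 (fun i => fderiv ℝ f x (EuclideanSpace.single i 1) : Fin 2 → ℝ)

/-- Divergence of a planar vector field. -/
def divg (u : E2 → E2) (x : E2) : ℝ :=
  ∑ i : Fin 2, fderiv ℝ u x (EuclideanSpace.single i 1) i

/-- Scalar curl of a planar vector field: ∂ₓu₂ − ∂ᵧu₁. -/
def curl2 (u : E2 → E2) (x : E2) : ℝ :=
  fderiv ℝ u x (EuclideanSpace.single 0 1) 1 - fderiv ℝ u x (EuclideanSpace.single 1 1) 0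

/-- L² norm of a scalar field on Ω. -/
def L2s (Ω : Set E2) (f : E2 → ℝ) : ℝ := Real.sqrt (∫ x in Ω, (f x)^2)

/-- L² norm of a vector field on Ω. -/
def L2v (Ω : Set E2) (u : E2 → E2) : ℝ := Real.sqrt (∫ x in Ω, ‖u x‖^2)

/-- H¹ norm of a scalar field on Ω. -/
def H1s (Ω : Set E2) (f : E2 → ℝ) : ℝ :=
  Real.sqrt ((∫ x in Ω, (f x)^2) + ∫ x in Ω, ‖grad f x‖^2)

/-- H¹ norm of a vector field on Ω. -/
def H1v (Ω : Set E2) (u : E2 → E2) : ℝ :=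
  Real.sqrt ((∫ x in Ω, ‖u x‖^2) + ∫ x in Ω, ‖fderiv ℝ u x‖^2)

/-- H^div norm of a vector field on Ω. -/
def HdivN (Ω : Set E2) (u : E2 → E2) : ℝ :=
  Real.sqrt ((∫ x in Ω, ‖u x‖^2) + ∫ x in Ω, (divg u x)^2)

/-- Membership in H¹(Ω) (scalar). -/
def MemH1 (Ω : Set E2) (f : E2 → ℝ) : Prop :=
  MemLp f 2 (volume.restrict Ω) ∧ MemLp (grad f) 2 (volume.restrict Ω)

/-- Membership in H^div(Ω). -/
def MemHdiv (Ω : Set E2) (u : E2 → E2) : Prop :=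
  MemLp u 2 (volume.restrict Ω) ∧ MemLp (divg u) 2 (volume.restrict Ω)

/-- Membership in H₀^div(Ω): vanishing normal trace, with `n` the outward unit normal. -/
def MemHdiv0 (Ω : Set E2) (n : E2 → E2) (u : E2 → E2) : Prop :=
  MemHdiv Ω u ∧ ∀ x ∈ frontier Ω, ⟪u x, n x⟫ = 0

/-- The mesh-dependent norm
    |||u||| = (‖u‖_{div}² + h‖∇·u‖_{∂Ω}² + h⁻¹‖u·n‖_{∂Ω}²)^{1/2}. -/
def tripleNorm (Ω : Set E2) (σ : Measure E2) (n : E2 → E2) (h : ℝ)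
    (u : E2 → E2) : ℝ :=
  Real.sqrt ((∫ x in Ω, ‖u x‖^2) + (∫ x in Ω, (divg u x)^2)
    + h * (∫ x, (divg u x)^2 ∂σ) + h⁻¹ * ∫ x, ⟪u x, n x⟫^2 ∂σ)

/-- The H² norm of a vector field on Ω. -/
def H2v (Ω : Set E2) (u : E2 → E2) : ℝ :=
  Real.sqrt (∑ i ∈ Finset.range 3, ∫ x in Ω, ‖iteratedFDeriv ℝ i u x‖^2)

/-- the normal trace of the Ritz projection of a field with
    vanishing normal trace is O(h^{3/2}): if w·n = 0 on ∂Ω and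
    |||w − R_h w||| ≤ C h ‖w‖₂ (the case s = 2 of the projection estimate),
    then ‖R_h w · n‖_{L²(∂Ω)} ≤ C h^{3/2} ‖w‖₂. -/
theorem statement15 (Ω : Set E2) (hΩo : IsOpen Ω) (hΩb : Bornology.IsBounded Ω)
    (σ : Measure E2) (hσ : σ (frontier Ω)ᶜ = 0)
    (n : E2 → E2) (hn : ∀ x ∈ frontier Ω, ‖n x‖ = 1)
    (h : ℝ) (hh : 0 < h)
    (w Rhw : E2 → E2)
    (hbc : ∀ x ∈ frontier Ω, ⟪w x, n x⟫ = 0)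
    (hbcσ : ∀ᵐ x ∂σ, ⟪w x, n x⟫ = 0)
    (C : ℝ) (hC : 0 < C)
    (hproj : tripleNorm Ω σ n h (fun x => w x - Rhw x) ≤ C * h * H2v Ω w)
    (hint : Integrable (fun x => ⟪Rhw x - w x, n x⟫^2) σ) :
    Real.sqrt (∫ x, ⟪Rhw x, n x⟫^2 ∂σ) ≤ C * h ^ ((3:ℝ)/2) * H2v Ω w := by
  have hH2 : 0 ≤ H2v Ω w := Real.sqrt_nonneg _
  have hR : 0 ≤ C * h * H2v Ω w := by positivity
  set u : E2 → E2 := fun x => w x - Rhw x with hu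
  set A : ℝ := ∫ x, ⟪u x, n x⟫^2 ∂σ with hA
  set S : ℝ := (∫ x in Ω, ‖u x‖^2) + (∫ x in Ω, (divg u x)^2)
    + h * (∫ x, (divg u x)^2 ∂σ) + h⁻¹ * A with hS
  have hI1 : 0 ≤ ∫ x in Ω, ‖u x‖^2 := integral_nonneg fun x => sq_nonneg _
  have hI2 : 0 ≤ ∫ x in Ω, (divg u x)^2 := integral_nonneg fun x => sq_nonneg _
  have hI3 : 0 ≤ ∫ x, (divg u x)^2 ∂σ := integral_nonneg fun x => sq_nonneg _
  have hAnn : 0 ≤ A := integral_nonneg fun x => sq_nonneg _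
  have hSnn : 0 ≤ S := by
    have : 0 ≤ h * (∫ x, (divg u x)^2 ∂σ) := mul_nonneg hh.le hI3
    have : 0 ≤ h⁻¹ * A := mul_nonneg (inv_nonneg.2 hh.le) hAnn
    positivity
  have hTS : tripleNorm Ω σ n h u = Real.sqrt S := rfl
  have hSle : S ≤ (C * h * H2v Ω w)^2 := by
    have h1 : Real.sqrt S ≤ C * h * H2v Ω w := hproj
    calc S = (Real.sqrt S)^2 := (Real.sq_sqrt hSnn).symm
    _ ≤ (C * h * H2v Ω w)^2 := pow_le_pow_left₀ (Real.sqrt_nonneg _) h1 2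
  have hAle : A ≤ h * (C * h * H2v Ω w)^2 := by
    have h2 : h⁻¹ * A ≤ S := by nlinarith [mul_nonneg hh.le hI3]
    have := mul_le_mul_of_nonneg_left (h2.trans hSle) hh.le
    calc A = h * (h⁻¹ * A) := by field_simp
    _ ≤ h * (C * h * H2v Ω w)^2 := this
  have heq : (∫ x, ⟪Rhw x, n x⟫^2 ∂σ) = A := by
    refine integral_congr_ae (hbcσ.mono fun x hx => ?_)
    have : ⟪u x, n x⟫ = - ⟪Rhw x, n x⟫ := by
      simp [hu, inner_sub_left, hx]
    show ⟪Rhw x, n x⟫^2 = ⟪u x, n x⟫^2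
    rw [this]; ring
  rw [heq]
  have hrhs : h * (C * h * H2v Ω w)^2 = (C * h ^ ((3:ℝ)/2) * H2v Ω w)^2 := by
    have h32 : (h ^ ((3:ℝ)/2))^2 = h^3 := by
      rw [← Real.rpow_natCast (h ^ ((3:ℝ)/2)) 2, ← Real.rpow_mul hh.le]
      norm_num
    have hr : (C * h ^ ((3:ℝ)/2) * H2v Ω w)^2
        = C^2 * (h ^ ((3:ℝ)/2))^2 * (H2v Ω w)^2 := by ring
    rw [hr, h32]; ring
  have : Real.sqrt A ≤ Real.sqrt ((C * h ^ ((3:ℝ)/2) * H2v Ω w)^2) := by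
    apply Real.sqrt_le_sqrt; rw [← hrhs]; exact hAle
  rwa [Real.sqrt_sq (by positivity)] at this
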